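/- Let W be the standard π-free resolution of ℤ/p (π = ℤ/p cyclic of prime order p): W_i is free over ℤ/p[π] on one generator e_i for i ≥ 0, with d(e_{2i−1}) = T·e_{2i−2} and d(e_{2i}) = N·e_{2i−1} (where N = 1+α+…+α^{p−1}, T = α−1). Define the coproduct ψ(e_{2i−1}) = Σ_{j+k=i} e_{2j} ⊗ e_{2k−1} + Σ_{j+k=i} e_{2j−1} ⊗ α·e_{2k}, and ψ(e_{2i}) = Σ_{j+k=i} e_{2j} ⊗ e_{2k} + Σ_{j+k=i+1} Σ_{0≤r<s<p} α^r e_{2j−1} ⊗ α^s e_{2k−1}. Then ψ is a chain map: d_{W⊗W} ∘ ψ = ψ ∘ d_W, where π acts diagonally on W ⊗ W. -/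
import Mathlib


open scoped TensorProduct
open Finset

/-- The group algebra `ℤ/p[π]` for `π = ℤ/p` cyclic of order `p`. -/
abbrev Rp (p : ℕ) : Type := MonoidAlgebra (ZMod p) (Multiplicative (ZMod p))

/-- The generator `α` of `π` inside `ℤ/p[π]`. -/
noncomputable def alphaP (p : ℕ) : Rp p :=
  MonoidAlgebra.of (ZMod p) (Multiplicative (ZMod p)) (Multiplicative.ofAdd (1 : ZMod p))

/-- The norm element `N = 1 + α + … + α^{p−1}`. -/
noncomputable def NormP (p : ℕ) : Rp p := ∑ j ∈ range p, alphaP p ^ j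

/-- The element `T = α − 1`. -/
noncomputable def TP (p : ℕ) : Rp p := alphaP p - 1

/-- Degree-`n` part of `W ⊗ W` lives in copies of `ℤ/p[π] ⊗_{ℤ/p} ℤ/p[π]`. -/
abbrev TPp (p : ℕ) := Rp p ⊗[ZMod p] Rp p

/-- The coefficient `c_m` with `d(e_m) = c_m · e_{m−1}` in the standard resolution `W`:
`d(e_{2i−1}) = T·e_{2i−2}` and `d(e_{2i}) = N·e_{2i−1}`. -/
noncomputable def cCoeff (p m : ℕ) : Rp p := if m % 2 = 1 then TP p else NormP p

/-- The image of `c_m` under the diagonal action on `W ⊗ W`: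
`Δ(T) = α⊗α − 1⊗1` and `Δ(N) = Σ_j α^j ⊗ α^j`. -/
noncomputable def cDiag (p m : ℕ) : TPp p :=
  if m % 2 = 1 then alphaP p ⊗ₜ[ZMod p] alphaP p - 1
  else ∑ j ∈ range p, (alphaP p ^ j) ⊗ₜ[ZMod p] (alphaP p ^ j)

/-- The coefficient of `e_a ⊗ e_b` in `ψ(e_{a+b})`:
`1⊗1` on components `e_{2j} ⊗ e_{2k}` and `e_{2j} ⊗ e_{2k−1}`, `1 ⊗ α` on components
`e_{2j−1} ⊗ e_{2k}`, and `Σ_{0≤r<s<p} α^r ⊗ α^s` on components `e_{2j−1} ⊗ e_{2k−1}`. -/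
noncomputable def psiCoeff (p a b : ℕ) : TPp p :=
  if a % 2 = 0 then 1
  else if b % 2 = 0 then (1 : Rp p) ⊗ₜ[ZMod p] alphaP p
  else ∑ r ∈ range p, ∑ s ∈ Ioo r p, (alphaP p ^ r) ⊗ₜ[ZMod p] (alphaP p ^ s)

lemma alphaP_pow_self (p : ℕ) : alphaP p ^ p = 1 := by
  rw [alphaP, ← map_pow]
  have : (Multiplicative.ofAdd (1 : ZMod p)) ^ p = 1 := by
    rw [← ofAdd_nsmul]
    simp [nsmul_eq_mul]
  rw [this, map_one]

lemma swap_sum {M : Type*} [AddCommMonoid M] (p : ℕ) (f : ℕ → ℕ → M) :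
    ∑ r ∈ range p, ∑ s ∈ Ioo r p, f r s = ∑ s ∈ range p, ∑ r ∈ range s, f r s := by
  apply Finset.sum_comm'
  intro r s
  simp only [mem_range, mem_Ioo]
  omega

lemma TSlem (p : ℕ) :
    ((alphaP p - 1) ⊗ₜ[ZMod p] (1 : Rp p)) *
        (∑ r ∈ range p, ∑ s ∈ Ioo r p, (alphaP p ^ r) ⊗ₜ[ZMod p] (alphaP p ^ s))
      = (∑ s ∈ range p, (alphaP p ^ s) ⊗ₜ[ZMod p] (alphaP p ^ s))
        - ∑ s ∈ range p, (1 : Rp p) ⊗ₜ[ZMod p] (alphaP p ^ s) := by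
  rw [Finset.mul_sum]
  simp_rw [Finset.mul_sum, Algebra.TensorProduct.tmul_mul_tmul, one_mul]
  rw [swap_sum, ← Finset.sum_sub_distrib]
  refine Finset.sum_congr rfl fun s hs => ?_
  simp_rw [sub_mul, one_mul, ← pow_succ']
  rw [← TensorProduct.sum_tmul, Finset.sum_range_sub (fun r => alphaP p ^ r), pow_zero,
    TensorProduct.sub_tmul]

lemma STlem (p : ℕ) :
    ((1 : Rp p) ⊗ₜ[ZMod p] (alphaP p - 1)) *
        (∑ r ∈ range p, ∑ s ∈ Ioo r p, (alphaP p ^ r) ⊗ₜ[ZMod p] (alphaP p ^ s))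
      = (∑ r ∈ range p, (alphaP p ^ r) ⊗ₜ[ZMod p] (1 : Rp p))
        - ∑ r ∈ range p, (alphaP p ^ r) ⊗ₜ[ZMod p] (alphaP p ^ (r + 1)) := by
  rw [Finset.mul_sum]
  simp_rw [Finset.mul_sum, Algebra.TensorProduct.tmul_mul_tmul, one_mul, sub_mul, one_mul,
    ← pow_succ']
  rw [← Finset.sum_sub_distrib]
  refine Finset.sum_congr rfl fun r hr => ?_
  rw [← TensorProduct.tmul_sum]
  have h1 : r + 1 ≤ p := mem_range.mp hr
  have : Ioo r p = Ico (r + 1) p := rfl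
  rw [this, Finset.sum_Ico_eq_sub _ h1,
    Finset.sum_range_sub (fun s => alphaP p ^ s), Finset.sum_range_sub (fun s => alphaP p ^ s),
    alphaP_pow_self, pow_zero]
  rw [show (1 : Rp p) - 1 - (alphaP p ^ (r+1) - 1) = 1 - alphaP p ^ (r+1) by ring,
    TensorProduct.tmul_sub]

/-- `ψ` is a chain map `d_{W⊗W} ∘ ψ = ψ ∘ d_W`, stated componentwise on the generator
`e_{n+1}`: the `(a,b)`-component (`a + b = n`) of `ψ(d e_{n+1}) = Δ(c_{n+1})·ψ(e_n)` agrees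
with that of `d_{W⊗W}(ψ(e_{n+1}))`, which receives `(c_{a+1} ⊗ 1)` times the
`(a+1,b)`-coefficient plus `(−1)^a (1 ⊗ c_{b+1})` times the `(a,b+1)`-coefficient. -/
theorem psi_chain_map (p : ℕ) [Fact (Nat.Prime p)] (n a b : ℕ) (hab : a + b = n) :
    cDiag p (n + 1) * psiCoeff p a b
      = (cCoeff p (a + 1) ⊗ₜ[ZMod p] (1 : Rp p)) * psiCoeff p (a + 1) b
        + ((-1 : ℤ) ^ a) • (((1 : Rp p) ⊗ₜ[ZMod p] cCoeff p (b + 1)) * psiCoeff p a (b + 1)) := by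
  subst hab
  rcases Nat.mod_two_eq_zero_or_one a with ha | ha <;>
    rcases Nat.mod_two_eq_zero_or_one b with hb | hb
  · -- a even, b even
    have h1 : (a + b + 1) % 2 = 1 := by omega
    have h2 : (a + 1) % 2 = 1 := by omega
    have h3 : (b + 1) % 2 = 1 := by omega
    have hs : ((-1 : ℤ) ^ a) = 1 := Even.neg_one_pow (Nat.even_iff.mpr ha)
    simp only [cDiag, cCoeff, psiCoeff, TP, h1, h2, h3, ha, hb, hs, if_true, if_pos,
      if_neg (by omega : ¬ (a+1) % 2 = 0), one_smul, mul_one, Nat.one_ne_zero, Nat.zero_ne_one, if_false, ite_false, if_true, ite_true, eq_self_iff_true]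
    rw [Algebra.TensorProduct.tmul_mul_tmul, one_mul, mul_one, TensorProduct.sub_tmul,
      TensorProduct.tmul_sub, Algebra.TensorProduct.one_def]
    abel
  · -- a even, b odd
    have h1 : (a + b + 1) % 2 = 0 := by omega
    have hs : ((-1 : ℤ) ^ a) = 1 := Even.neg_one_pow (Nat.even_iff.mpr ha)
    simp only [cDiag, cCoeff, psiCoeff, TP, NormP, h1, ha, hb, hs, if_pos, if_true,
      if_neg (by omega : ¬ (a + b + 1) % 2 = 1),
      if_neg (by omega : ¬ (a+1) % 2 = 0), if_neg (by omega : ¬ b % 2 = 0),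
      if_pos (by omega : (a+1) % 2 = 1), if_neg (by omega : ¬ (b+1) % 2 = 1),
      one_smul, mul_one, Nat.one_ne_zero, Nat.zero_ne_one, if_false, ite_false, if_true, ite_true, eq_self_iff_true]
    rw [TSlem, TensorProduct.tmul_sum]
    abel
  · -- a odd, b even
    have h1 : (a + b + 1) % 2 = 0 := by omega
    have hs : ((-1 : ℤ) ^ a) = -1 := Odd.neg_one_pow (Nat.odd_iff.mpr ha)
    simp only [cDiag, cCoeff, psiCoeff, TP, NormP, h1, ha, hb, hs,
      if_neg (by omega : ¬ (a + b + 1) % 2 = 1),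
      if_neg (by omega : ¬ a % 2 = 0), if_pos (by omega : b % 2 = 0),
      if_neg (by omega : ¬ (a+1) % 2 = 1), if_pos (by omega : (a+1) % 2 = 0),
      if_pos (by omega : (b+1) % 2 = 1),
      if_neg (by omega : ¬ (b+1) % 2 = 0), mul_one, neg_smul, one_smul, Nat.one_ne_zero, Nat.zero_ne_one, if_false, ite_false, if_true, ite_true, eq_self_iff_true]
    rw [STlem, Finset.sum_mul]
    simp_rw [Algebra.TensorProduct.tmul_mul_tmul, mul_one, ← pow_succ]
    rw [TensorProduct.sum_tmul]
    abel
  · -- a odd, b odd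
    have h1 : (a + b + 1) % 2 = 1 := by omega
    have hs : ((-1 : ℤ) ^ a) = -1 := Odd.neg_one_pow (Nat.odd_iff.mpr ha)
    simp only [cDiag, cCoeff, psiCoeff, TP, NormP, h1, ha, hb, hs,
      if_pos, if_neg (by omega : ¬ a % 2 = 0), if_neg (by omega : ¬ b % 2 = 0),
      if_neg (by omega : ¬ (a+1) % 2 = 1), if_pos (by omega : (a+1) % 2 = 0),
      if_neg (by omega : ¬ (b+1) % 2 = 1), if_pos (by omega : (b+1) % 2 = 0),
      mul_one, neg_smul, one_smul, Nat.one_ne_zero, Nat.zero_ne_one, if_false, ite_false, if_true, ite_true, eq_self_iff_true]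
    have key : alphaP p ⊗ₜ[ZMod p] alphaP p - 1
        = ((alphaP p - 1) ⊗ₜ[ZMod p] (1 : Rp p)) * ((1 : Rp p) ⊗ₜ[ZMod p] alphaP p)
          + (1 : Rp p) ⊗ₜ[ZMod p] (alphaP p - 1) := by
      rw [Algebra.TensorProduct.tmul_mul_tmul, one_mul, mul_one, TensorProduct.sub_tmul,
        TensorProduct.tmul_sub, Algebra.TensorProduct.one_def]
      abel
    rw [key, add_mul, mul_right_comm, TSlem, STlem, sub_mul,
      TensorProduct.sum_tmul, TensorProduct.tmul_sum]
    simp only [Finset.sum_mul, Algebra.TensorProduct.tmul_mul_tmul, mul_one, one_mul, ← pow_succ]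
    abel
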